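/- k-atomicity is equivalent to a commit-point formulation: a history H is k-atomic if and only if each operation op can be assigned a distinct commit point c(op) in the open interval (op.s, op.f) such that, ordering operations by commit point, every read follows its dictating write with at most k−1 other writes in between. -/

import Mathlib

open scoped Classical

/-- An operation on a single register. -/
structure Op where
  s : ℝ
  f : ℝ
  isRead : Bool
  val : ℕ

abbrev History := Finset Op

def Op.isWrite (op : Op) : Prop := op.isRead = false

/-- Well-formedness of a history: operations have positive duration, all endpoints
are distinct, writes have distinct values, and every read has a dictating write
that finishes before the read starts. -/
def Wf (H : History) : Prop :=
  (∀ op ∈ H, op.s < op.f) ∧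
  (∀ op1 ∈ H, ∀ op2 ∈ H, op1 ≠ op2 →
    op1.s ≠ op2.s ∧ op1.f ≠ op2.f ∧ op1.s ≠ op2.f) ∧
  (∀ w1 ∈ H, ∀ w2 ∈ H, w1.isWrite → w2.isWrite → w1.val = w2.val → w1 = w2) ∧
  (∀ r ∈ H, r.isRead = true → ∃ w ∈ H, w.isWrite ∧ w.val = r.val ∧ w.f < r.s)

/-- `a` occurs before `b` in the total order represented by the list `l`. -/
def Before (l : List Op) (a b : Op) : Prop :=
  ∃ l1 l2 l3, l = l1 ++ a :: l2 ++ b :: l3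

/-- A total order (list) is valid if it respects real-time precedence. -/
def Valid (l : List Op) : Prop :=
  ∀ a ∈ l, ∀ b ∈ l, a.f < b.s → Before l a b

/-- `l` is a total order on exactly the operations of `H`. -/
def IsLinearization (H : History) (l : List Op) : Prop :=
  l.Nodup ∧ ∀ op, op ∈ l ↔ op ∈ H

/-- In the total order `l`, every read follows its dictating write, separated from
it by at most `k - 1` other writes. -/
def KAtomicOrder (k : ℕ) (l : List Op) : Prop :=
  ∀ r ∈ l, r.isRead = true → ∀ w ∈ l, w.isWrite → w.val = r.val →
    ∃ l1 l2 l3, l = l1 ++ w :: l2 ++ r :: l3 ∧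
      (l2.filter (fun op => op.isRead = false)).length ≤ k - 1

/-- A history is `k`-atomic if it has a valid `k`-atomic total order. -/
def KAtomic (k : ℕ) (H : History) : Prop :=
  ∃ l, IsLinearization H l ∧ Valid l ∧ KAtomicOrder k l

/-- The cluster of a write `w`: the write together with its dictated reads. -/
noncomputable def cluster (H : History) (w : Op) : Finset Op :=
  insert w (H.filter (fun r => r.isRead = true ∧ r.val = w.val))

/-- Minimum finish time over the cluster of `w`. -/
noncomputable def fmin (H : History) (w : Op) : ℝ :=
  (cluster H w).inf' (Finset.insert_nonempty _ _) Op.f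

/-- Maximum start time over the cluster of `w`. -/
noncomputable def smax (H : History) (w : Op) : ℝ :=
  (cluster H w).sup' (Finset.insert_nonempty _ _) Op.s

/-- The zone of `w`'s cluster is forward if its minimum finish time is less than
its maximum start time. -/
def ForwardZone (H : History) (w : Op) : Prop := fmin H w < smax H w

/-- Low endpoint of the zone of `w`'s cluster. -/
noncomputable def zoneL (H : History) (w : Op) : ℝ := min (fmin H w) (smax H w)

/-- High endpoint of the zone of `w`'s cluster. -/
noncomputable def zoneH (H : History) (w : Op) : ℝ := max (fmin H w) (smax H w)

/-- The zone of `w`'s cluster, as a closed interval of time. -/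
noncomputable def zone (H : History) (w : Op) : Set ℝ := Set.Icc (zoneL H w) (zoneH H w)

/-- `k`-atomicity is equivalent to the commit-point formulation: `H` is `k`-atomic
iff each operation can be assigned a distinct commit point strictly inside its
time interval such that, ordering operations by commit point, every read follows
its dictating write with at most `k - 1` other writes in between. -/

instance : Inhabited Op := ⟨⟨0, 1, false, 0⟩⟩

lemma getElem_decomp {l l1 l2 : List Op} {x : Op} (h : l = l1 ++ x :: l2) :
    ∃ hh : l1.length < l.length, l[l1.length] = x := by
  subst h
  refine ⟨by simp, ?_⟩
  rw [List.getElem_append_right (le_refl _)]; simp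

lemma before_asymm {l : List Op} (hnd : l.Nodup) {a b : Op}
    (h1 : Before l a b) (h2 : Before l b a) : False := by
  obtain ⟨l1, l2, l3, hl⟩ := h1
  obtain ⟨m1, m2, m3, hm⟩ := h2
  obtain ⟨hia, ea⟩ := getElem_decomp (show l = l1 ++ a :: (l2 ++ b :: l3) by simp [hl])
  obtain ⟨hib, eb⟩ := getElem_decomp hl
  obtain ⟨hib', eb'⟩ := getElem_decomp (show l = m1 ++ b :: (m2 ++ a :: m3) by simp [hm])
  obtain ⟨hia', ea'⟩ := getElem_decomp hm
  have e1 : l1.length = (m1 ++ b :: m2).length := hnd.getElem_inj_iff.mp (ea.trans ea'.symm)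
  have e2 : (l1 ++ a :: l2).length = m1.length := hnd.getElem_inj_iff.mp (eb.trans eb'.symm)
  simp [List.length_append] at e1 e2
  omega

lemma before_of_getElem {l : List Op} {i j : ℕ} (hij : i < j) (hj : j < l.length) :
    Before l (l[i]'(lt_trans hij hj)) l[j] := by
  have h2 : l.drop (i+1) = (l.drop (i+1)).take (j - i - 1) ++ l[j] :: l.drop (j+1) := by
    conv_lhs => rw [← List.take_append_drop (j - i - 1) (l.drop (i+1))]
    rw [List.drop_drop]
    have he : i + 1 + (j - i - 1) = j := by omega
    rw [he, List.drop_eq_getElem_cons hj]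
  refine ⟨l.take i, (l.drop (i+1)).take (j - i - 1), l.drop (j+1), ?_⟩
  conv_lhs => rw [← List.take_append_drop i l, List.drop_eq_getElem_cons (lt_trans hij hj), h2]
  simp

lemma before_of_pairwise {c : Op → ℝ} {l : List Op}
    (hp : l.Pairwise fun a b => c a < c b) {a b : Op}
    (ha : a ∈ l) (hb : b ∈ l) (hab : c a < c b) : Before l a b := by
  induction l with
  | nil => cases ha
  | cons x t ih =>
    rcases List.pairwise_cons.mp hp with ⟨hx, ht⟩
    rcases List.mem_cons.mp ha with rfl | ha'
    · have hb' : b ∈ t := by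
        rcases List.mem_cons.mp hb with rfl | h
        · exact absurd hab (lt_irrefl _)
        · exact h
      obtain ⟨l2, l3, hl⟩ := List.append_of_mem hb'
      exact ⟨[], l2, l3, by simp [hl]⟩
    · have hb' : b ∈ t := by
        rcases List.mem_cons.mp hb with rfl | h
        · exact absurd (hx a ha') (not_lt.mpr (le_of_lt hab))
        · exact h
      obtain ⟨l1, l2, l3, hl⟩ := ih ht ha' hb'
      exact ⟨x :: l1, l2, l3, by simp [hl]⟩

lemma ne_of_pairwise {c : Op → ℝ} {l : List Op}
    (hnd : l.Nodup) (hp : l.Pairwise fun a b => c a < c b) {a b : Op}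
    (ha : a ∈ l) (hb : b ∈ l) (hne : a ≠ b) : c a ≠ c b := by
  obtain ⟨i, hi, rfl⟩ := List.mem_iff_getElem.mp ha
  obtain ⟨j, hj, rfl⟩ := List.mem_iff_getElem.mp hb
  have hpg := List.pairwise_iff_getElem.mp hp
  rcases lt_trichotomy i j with h | h | h
  · exact ne_of_lt (hpg i j hi hj h)
  · subst h; exact absurd rfl hne
  · exact ne_of_gt (hpg j i hj hi h)

lemma pairwise_of_decomp {R : Op → Op → Prop} {l l1 l2 l3 : List Op} {w r : Op}
    (hp : l.Pairwise R) (hl : l = l1 ++ w :: l2 ++ r :: l3) : R w r := by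
  subst hl
  rw [List.pairwise_append] at hp
  exact hp.2.2 w (by simp) r (by simp)

lemma mem_mid {c : Op → ℝ} {l l1 l2 l3 : List Op} {w r : Op}
    (hp : l.Pairwise fun a b => c a < c b) (hl : l = l1 ++ w :: l2 ++ r :: l3) :
    ∀ op, op ∈ l2 ↔ op ∈ l ∧ c w < c op ∧ c op < c r := by
  subst hl
  rw [List.pairwise_append] at hp
  obtain ⟨hpA, hp2, h12⟩ := hp
  rw [List.pairwise_append] at hpA
  obtain ⟨-, hpwl2, h1w⟩ := hpA
  rw [List.pairwise_cons] at hpwl2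
  obtain ⟨hw, -⟩ := hpwl2
  rw [List.pairwise_cons] at hp2
  obtain ⟨hr, -⟩ := hp2
  intro op
  constructor
  · intro h
    exact ⟨by simp [h], hw op h, h12 op (by simp [h]) r (by simp)⟩
  · rintro ⟨hmem, hc1, hc2⟩
    simp only [List.mem_append, List.mem_cons] at hmem
    rcases hmem with (h | h | h) | h | h
    · exact absurd (h1w op h w (by simp)) (by intro hx; exact absurd (lt_trans hx hc1) (lt_irrefl _))
    · subst h; exact absurd hc1 (lt_irrefl _)
    · exact h
    · subst h; exact absurd hc2 (lt_irrefl _)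
    · exact absurd (hr op h) (by intro hx; exact absurd (lt_trans hx hc2) (lt_irrefl _))

lemma count_eq (H : History) {c : Op → ℝ} {l l1 l2 l3 : List Op} {w r : Op}
    (hnd : l.Nodup) (hmem : ∀ op, op ∈ l ↔ op ∈ H)
    (hp : l.Pairwise fun a b => c a < c b) (hl : l = l1 ++ w :: l2 ++ r :: l3) :
    (l2.filter (fun op => op.isRead = false)).length
      = (H.filter (fun w' => w'.isWrite ∧ c w < c w' ∧ c w' < c r)).card := by
  have hmid := mem_mid hp hl
  have hnd2 : l2.Nodup := by
    rw [hl] at hnd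
    simp only [List.nodup_append, List.nodup_cons] at hnd
    tauto
  have hndf : (l2.filter (fun op => decide (op.isRead = false))).Nodup := hnd2.filter _
  rw [← List.toFinset_card_of_nodup hndf]
  refine congrArg Finset.card ?_
  ext op
  rw [Finset.mem_filter]
  simp only [List.mem_toFinset, List.mem_filter, Finset.mem_filter, decide_eq_true_eq,
    Op.isWrite]
  constructor
  · rintro ⟨h2, hw'⟩
    obtain ⟨hmeml, hc1, hc2⟩ := (hmid op).mp h2
    exact ⟨(hmem op).mp hmeml, hw', hc1, hc2⟩
  · rintro ⟨hH, hw', hc1, hc2⟩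
    exact ⟨(hmid op).mpr ⟨(hmem op).mpr hH, hc1, hc2⟩, hw'⟩

lemma order_iff (H : History) {c : Op → ℝ} {l : List Op} (hnd : l.Nodup)
    (hmem : ∀ op, op ∈ l ↔ op ∈ H) (hp : l.Pairwise fun a b => c a < c b)
    {w r : Op} (hwl : w ∈ l) (hrl : r ∈ l) (hcwr : c w < c r) (k : ℕ) :
    (∃ l1 l2 l3, l = l1 ++ w :: l2 ++ r :: l3 ∧
        (l2.filter (fun op => op.isRead = false)).length ≤ k - 1)
      ↔ (H.filter (fun w' => w'.isWrite ∧ c w < c w' ∧ c w' < c r)).card ≤ k - 1 := by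
  constructor
  · rintro ⟨l1, l2, l3, hl, hlen⟩
    rw [← count_eq H hnd hmem hp hl]
    exact hlen
  · intro hcard
    obtain ⟨l1, l2, l3, hl⟩ := before_of_pairwise hp hwl hrl hcwr
    exact ⟨l1, l2, l3, hl, by rw [count_eq H hnd hmem hp hl]; exact hcard⟩

noncomputable def Mfun (l : List Op) (i : ℕ) : ℝ :=
  (Finset.range (i+1)).sup' ⟨0, Finset.mem_range.mpr (Nat.succ_pos i)⟩
    (fun j => (l.getD j default).s)

noncomputable def mfun (l : List Op) (i : ℕ) : ℝ :=
  (Finset.Ico (min i (l.length - 1)) (max l.length 1)).inf'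
    ⟨min i (l.length - 1), Finset.mem_Ico.mpr (by omega)⟩
    (fun j => (l.getD j default).f)

noncomputable def cfun (l : List Op) (i : ℕ) : ℝ :=
  (1 - ((i:ℝ)+1)/((l.length:ℝ)+1)) * Mfun l i + (((i:ℝ)+1)/((l.length:ℝ)+1)) * mfun l i

lemma exists_commit {l : List Op} (hnd : l.Nodup) (hv : Valid l)
    (hdur : ∀ op ∈ l, op.s < op.f)
    (hdist : ∀ a ∈ l, ∀ b ∈ l, a ≠ b → a.s ≠ b.f) :
    ∃ c : Op → ℝ, (∀ op ∈ l, op.s < c op ∧ c op < op.f) ∧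
      l.Pairwise fun a b => c a < c b := by
  rcases Nat.eq_zero_or_pos l.length with h0 | hn
  · rw [List.length_eq_zero_iff] at h0
    subst h0
    exact ⟨fun _ => 0, by simp, List.Pairwise.nil⟩
  · set n := l.length with hn_def
    set g : ℕ → Op := fun i => l.getD i default with hg
    have hgi : ∀ i (h : i < n), g i = l[i] := fun i h => List.getD_eq_getElem l default h
    have key : ∀ j1 j2, j1 < n → j2 < n → j1 ≤ j2 → (g j1).s < (g j2).f := by
      intro j1 j2 h1 h2 h12
      have hmem1 : g j1 ∈ l := by rw [hgi j1 h1]; exact List.getElem_mem _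
      have hmem2 : g j2 ∈ l := by rw [hgi j2 h2]; exact List.getElem_mem _
      rcases eq_or_lt_of_le h12 with rfl | hlt
      · exact hdur _ hmem1
      · have hne : g j1 ≠ g j2 := by
          rw [hgi j1 h1, hgi j2 h2]
          intro he
          exact absurd (hnd.getElem_inj_iff.mp he) (Nat.ne_of_lt hlt)
        rcases lt_or_gt_of_ne (hdist _ hmem1 _ hmem2 hne) with h | h
        · exact h
        · exfalso
          have hb1 : Before l (g j1) (g j2) := by
            rw [hgi j1 h1, hgi j2 h2]
            exact before_of_getElem hlt h2
          exact before_asymm hnd (hv _ hmem2 _ hmem1 h) hb1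
    have hM_le : ∀ i j, j ≤ i → (g j).s ≤ Mfun l i := by
      intro i j hji
      simp only [Mfun]
      have hj2 : j ∈ Finset.range (i+1) := Finset.mem_range.mpr (by omega)
      exact Finset.le_sup' (fun j => (l.getD j default).s) hj2
    have hm_le : ∀ i j, i ≤ j → j < n → mfun l i ≤ (g j).f := by
      intro i j hij hj
      simp only [mfun]
      have hj2 : j ∈ Finset.Ico (min i (l.length - 1)) (max l.length 1) :=
        Finset.mem_Ico.mpr (by omega)
      exact Finset.inf'_le (fun j => (l.getD j default).f) hj2
    have hMm : ∀ i, i < n → Mfun l i < mfun l i := by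
      intro i hi
      simp only [Mfun, mfun]
      refine (Finset.sup'_lt_iff _).mpr ?_
      intro j hj
      refine (Finset.lt_inf'_iff _).mpr ?_
      intro j2 hj2
      rw [Finset.mem_range] at hj
      rw [Finset.mem_Ico] at hj2
      exact key j j2 (by omega) (by omega) (by omega)
    have hMmono : ∀ i, Mfun l i ≤ Mfun l (i+1) := by
      intro i
      simp only [Mfun]
      exact Finset.sup'_mono _ (Finset.range_subset_range.mpr (by omega)) _
    have hmmono : ∀ i, i + 1 < n → mfun l i ≤ mfun l (i+1) := by
      intro i hi
      simp only [mfun]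
      exact Finset.inf'_mono _ (Finset.Ico_subset_Ico (by omega) (le_refl _)) _
    have htpos : ∀ i : ℕ, 0 < ((i:ℝ)+1)/((n:ℝ)+1) := by
      intro i
      positivity
    have htlt : ∀ i : ℕ, i < n → ((i:ℝ)+1)/((n:ℝ)+1) < 1 := by
      intro i hi
      rw [div_lt_one (by positivity)]
      have : (i:ℝ) < (n:ℝ) := by exact_mod_cast hi
      linarith
    have hbound : ∀ i, i < n → Mfun l i < cfun l i ∧ cfun l i < mfun l i := by
      intro i hi
      have h1 := hMm i hi
      have h2 := htpos i
      have h3 := htlt i hi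
      simp only [cfun, ← hn_def]
      constructor
      · nlinarith [mul_pos h2 (sub_pos.mpr h1)]
      · nlinarith [mul_pos (sub_pos.mpr h3) (sub_pos.mpr h1)]
    have hstep : ∀ i, i + 1 < n → cfun l i < cfun l (i+1) := by
      intro i hi
      have h1 := hMm i (by omega)
      have h2 := htpos (i+1)
      have h3 := htlt (i+1) hi
      have h4 := hMmono i
      have h5 := hmmono i hi
      have h6 : ((i:ℝ)+1)/((n:ℝ)+1) < ((i:ℝ)+1+1)/((n:ℝ)+1) :=
        (div_lt_div_iff_of_pos_right (by positivity)).mpr (by linarith)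
      simp only [cfun, ← hn_def]
      push_cast at h2 h3 ⊢
      nlinarith [mul_pos (sub_pos.mpr h6) (sub_pos.mpr h1),
        mul_nonneg (sub_nonneg.mpr (le_of_lt h3)) (sub_nonneg.mpr h4),
        mul_nonneg (le_of_lt h2) (sub_nonneg.mpr h5)]
    have hmono : ∀ i j, i < j → j < n → cfun l i < cfun l j := by
      intro i j hij hj
      induction j with
      | zero => omega
      | succ j ih =>
        rcases Nat.lt_or_ge i j with h | h
        · exact lt_trans (ih h (by omega)) (hstep j hj)
        · have : i = j := by omega
          subst this
          exact hstep i hj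
    have hidx : ∀ (i : ℕ) (h : i < n), l.idxOf l[i] = i := by
      intro i h
      have h1 : l.idxOf l[i] < n := List.idxOf_lt_length_of_mem (List.getElem_mem _)
      have h2 : l[l.idxOf l[i]]'h1 = l[i] := List.getElem_idxOf h1
      exact hnd.getElem_inj_iff.mp h2
    refine ⟨fun op => cfun l (l.idxOf op), ?_, ?_⟩
    · intro op hop
      have hi : l.idxOf op < n := List.idxOf_lt_length_of_mem hop
      have hop' : g (l.idxOf op) = op := by
        rw [hgi _ hi]
        exact List.getElem_idxOf hi
      obtain ⟨hb1, hb2⟩ := hbound _ hi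
      constructor
      · calc op.s = (g (l.idxOf op)).s := by rw [hop']
          _ ≤ Mfun l (l.idxOf op) := hM_le _ _ (le_refl _)
          _ < cfun l (l.idxOf op) := hb1
      · calc cfun l (l.idxOf op) < mfun l (l.idxOf op) := hb2
          _ ≤ (g (l.idxOf op)).f := hm_le _ _ (le_refl _) hi
          _ = op.f := by rw [hop']
    · rw [List.pairwise_iff_getElem]
      intro i j hi hj hij
      show cfun l (l.idxOf l[i]) < cfun l (l.idxOf l[j])
      rw [hidx i hi, hidx j hj]
      exact hmono i j hij hj

theorem stmt_17 (H : History) (hWf : Wf H) (k : ℕ) (hk : 1 ≤ k) :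
    KAtomic k H ↔ ∃ c : Op → ℝ,
      (∀ op ∈ H, op.s < c op ∧ c op < op.f) ∧
      (∀ a ∈ H, ∀ b ∈ H, a ≠ b → c a ≠ c b) ∧
      (∀ r ∈ H, r.isRead = true → ∀ w ∈ H, w.isWrite → w.val = r.val →
        c w < c r ∧
          (H.filter (fun w' => w'.isWrite ∧ c w < c w' ∧ c w' < c r)).card ≤ k - 1) := by
  constructor
  · rintro ⟨l, ⟨hnd, hmem⟩, hv, hka⟩
    obtain ⟨c, hint, hp⟩ := exists_commit hnd hv
      (fun op hop => hWf.1 op ((hmem op).mp hop))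
      (fun a ha b hb hne => (hWf.2.1 a ((hmem a).mp ha) b ((hmem b).mp hb) hne).2.2)
    refine ⟨c, fun op hop => hint op ((hmem op).mpr hop), ?_, ?_⟩
    · intro a ha b hb hne
      exact ne_of_pairwise hnd hp ((hmem a).mpr ha) ((hmem b).mpr hb) hne
    · intro r hr hrr w hw hww hval
      obtain ⟨l1, l2, l3, hl, hlen⟩ :=
        hka r ((hmem r).mpr hr) hrr w ((hmem w).mpr hw) hww hval
      have hcwr : c w < c r := pairwise_of_decomp hp hl
      refine ⟨hcwr, ?_⟩
      exact (order_iff H hnd hmem hp ((hmem w).mpr hw) ((hmem r).mpr hr) hcwr k).mp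
        ⟨l1, l2, l3, hl, hlen⟩
  · rintro ⟨c, hint, hinj, hkey⟩
    set l : List Op := H.toList.mergeSort (fun a b => decide (c a ≤ c b)) with hldef
    have hperm : l.Perm H.toList := List.mergeSort_perm H.toList _
    have hnd : l.Nodup := hperm.nodup_iff.mpr H.nodup_toList
    have hmem : ∀ op, op ∈ l ↔ op ∈ H := by
      intro op
      rw [hperm.mem_iff, Finset.mem_toList]
    have hsorted : l.Pairwise fun a b => c a ≤ c b := by
      have := List.pairwise_mergeSort (le := fun a b => decide (c a ≤ c b))
        (fun a b cc h1 h2 => by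
          simp only [decide_eq_true_eq] at *
          exact le_trans h1 h2)
        (fun a b => by
          simp only [Bool.or_eq_true, decide_eq_true_eq]
          exact le_total (c a) (c b))
        H.toList
      rw [← hldef] at this
      exact this.imp (fun h => by simpa using h)
    have hp : l.Pairwise fun a b => c a < c b := by
      have hne : l.Pairwise (fun a b => a ≠ b) := hnd
      refine List.Pairwise.imp_of_mem ?_ (hsorted.and hne)
      intro a b ha hb h
      exact lt_of_le_of_ne h.1 (hinj a ((hmem a).mp ha) b ((hmem b).mp hb) h.2)
    refine ⟨l, ⟨hnd, hmem⟩, ?_, ?_⟩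
    · intro a ha b hb hfs
      have h1 := hint a ((hmem a).mp ha)
      have h2 := hint b ((hmem b).mp hb)
      exact before_of_pairwise hp ha hb (by linarith)
    · intro r hrl hrr w hwl hww hval
      obtain ⟨hcwr, hcard⟩ := hkey r ((hmem r).mp hrl) hrr w ((hmem w).mp hwl) hww hval
      exact (order_iff H hnd hmem hp hwl hrl hcwr k).mpr hcard
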